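/- Let σ² > 0, C_4 > 0, M_1 > 0, ξ_1 ≥ 2, and δ_1 > 0 with β > 1 + δ_1, and let c : ℕ → ℝ be a nonincreasing nonnegative sequence satisfying (C_4 − M_1 k^{−ξ_1}) k^{−β} ≤ c_k ≤ (C_4 + M_1 k^{−ξ_1}) k^{−β} for all k ≥ 1 (the algebraic-decay condition (3.5) with c_k playing the role of ‖a − a(k)‖_R²). Let K_n satisfy C_l ≤ K_n^{2+δ_1}/n ≤ C_u for some positive C_l, C_u, set N = n − K_n, L_n(k) = (k/N)σ² + c_k for 1 ≤ k ≤ K_n, and let k_n* minimize L_n over {1,…,K_n}. Then k_n* = (σ²/(N C_4 β))^{−1/(β+1)} + O(1); that is, there exists C > 0 such that |k_n* − (σ²/(N C_4 β))^{−1/(β+1)}| ≤ C for all sufficiently large n. -/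

import Mathlib

open Filter

set_option maxHeartbeats 1000000

lemma lemA (p : ℝ) (hp : 1 ≤ p) {y : ℝ} (hy : 0 < y) :
    p + 1 + p / 4 * min ((y - 1) ^ 2) 1 ≤ y ^ (-p) + p * y := by
  have hp0 : 0 < p := lt_of_lt_of_le one_pos hp
  rcases le_or_gt y 1 with h1 | h1
  · -- y ≤ 1
    obtain ⟨s, hs⟩ : ∃ s : ℝ, s = 1 - y := ⟨_, rfl⟩
    have hs0 : 0 ≤ s := by rw [hs]; linarith
    have hsy : s + s ^ 2 ≤ s / y := by
      rw [le_div_iff₀ hy]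
      nlinarith
    have hinv : y ^ (-p) = (1 + s / y) ^ p := by
      have h : 1 + s / y = y⁻¹ := by field_simp [hs]; linarith
      rw [h, Real.rpow_neg hy.le, ← Real.inv_rpow hy.le]
    have hb : 1 + p * (s / y) ≤ (1 + s / y) ^ p :=
      one_add_mul_self_le_rpow_one_add (by
        have : (0:ℝ) ≤ s / y := by positivity
        linarith) hp
    have hkey : 1 + p * (s + s ^ 2) ≤ y ^ (-p) := by
      rw [hinv]
      nlinarith
    have hmin : min ((y - 1) ^ 2) 1 ≤ s ^ 2 := by
      have h : (y - 1) ^ 2 = s ^ 2 := by rw [hs]; ring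
      rw [← h]; exact min_le_left _ _
    nlinarith [mul_le_mul_of_nonneg_left hmin (by positivity : (0:ℝ) ≤ p / 4)]
  · -- 1 < y
    obtain ⟨s, hs⟩ : ∃ s : ℝ, s = 1 - 1 / y := ⟨_, rfl⟩
    have hy1 : (0:ℝ) < 1 / y := by positivity
    have hs0 : 0 < s := by
      rw [hs]; simp only [sub_pos]
      rw [div_lt_one hy]; exact h1
    have hs1 : s < 1 := by rw [hs]; linarith
    have hys : y * (1 - s) = 1 := by
      rw [hs]; field_simp; ring
    have hb : 1 - p * s ≤ y ^ (-p) := by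
      have h2 : 1 + p * (-s) ≤ (1 + -s) ^ p :=
        one_add_mul_self_le_rpow_one_add (by linarith) hp
      have h3 : (1 + -s) ^ p = y ^ (-p) := by
        have hne : 1 + -s = y⁻¹ := by
          rw [hs]; field_simp; ring
        rw [hne, Real.rpow_neg hy.le, ← Real.inv_rpow hy.le]
      linarith [h3.le, h3.ge]
    have hgy : 1 + s + s ^ 2 ≤ y := by nlinarith
    have hmain : p + 1 + p * s ^ 2 ≤ y ^ (-p) + p * y := by nlinarith
    have hmin : p / 4 * min ((y - 1) ^ 2) 1 ≤ p * s ^ 2 := by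
      rcases le_or_gt y 2 with h2 | h2
      · have hmle : min ((y - 1) ^ 2) 1 ≤ (y - 1) ^ 2 := min_le_left _ _
        have hsy : s * y = y - 1 := by rw [hs]; field_simp
        have h4 : (y - 1) ^ 2 ≤ 4 * s ^ 2 := by nlinarith
        nlinarith [mul_le_mul_of_nonneg_left hmle (by positivity : (0:ℝ) ≤ p / 4)]
      · have hmle : min ((y - 1) ^ 2) 1 ≤ 1 := min_le_right _ _
        have hs2 : 1 / 2 ≤ s := by
          rw [hs]
          have h5 : 1 / y ≤ 1 / 2 := by
            rw [div_le_div_iff₀ hy (by norm_num)]; linarith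
          linarith
        have h6 : 1 / 4 ≤ s ^ 2 := by nlinarith
        nlinarith [mul_le_mul_of_nonneg_left hmle (by positivity : (0:ℝ) ≤ p / 4)]
    linarith

lemma lemB (p : ℝ) (hp : 1 ≤ p) {s : ℝ} (hs : 0 ≤ s) :
    (1 + s) ^ (-p) ≤ 1 - p * s + p ^ 2 * s ^ 2 := by
  have hp0 : 0 < p := lt_of_lt_of_le one_pos hp
  have h1s : (0:ℝ) < 1 + s := by linarith
  have hb : 1 + p * s ≤ (1 + s) ^ p :=
    one_add_mul_self_le_rpow_one_add (by linarith) hp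
  have hps : (0:ℝ) < 1 + p * s := by positivity
  have hq : (1 + s) ^ (-p) * (1 + s) ^ p = 1 := by
    rw [← Real.rpow_add h1s]; simp
  have hxpos : 0 < (1 + s) ^ (-p) := Real.rpow_pos_of_pos h1s _
  have h1 : (1 + s) ^ (-p) * (1 + p * s) ≤ 1 := by
    calc (1 + s) ^ (-p) * (1 + p * s) ≤ (1 + s) ^ (-p) * (1 + s) ^ p :=
          mul_le_mul_of_nonneg_left hb hxpos.le
      _ = 1 := hq
  have h3 : (1 - p * s + p ^ 2 * s ^ 2) * (1 + p * s) = 1 + p ^ 3 * s ^ 3 := by ring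
  have h2 : (1 + s) ^ (-p) * (1 + p * s) ≤ (1 - p * s + p ^ 2 * s ^ 2) * (1 + p * s) := by
    rw [h3]
    have : (0:ℝ) ≤ p ^ 3 * s ^ 3 := by positivity
    linarith
  exact le_of_mul_le_mul_right h2 hps

/-- algebraic-decay case — location of the minimizer `k_n*` of
`L_n(k) = (k/N)σ² + c_k`, where `c_k` satisfies the algebraic-decay condition (3.5)
with `ξ1 ≥ 2` and `β > 1 + δ1`, and `K_n` satisfies (K.4):
`k_n* = (σ²/(N C₄ β))^{-1/(β+1)} + O(1)`. -/
theorem stmt_16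
    (σ2 C4 M1 ξ1 δ1 β : ℝ) (hσ2 : 0 < σ2) (hC4 : 0 < C4) (hM1 : 0 < M1)
    (hξ1 : 2 ≤ ξ1) (hδ1 : 0 < δ1) (hβ : 1 + δ1 < β)
    (c : ℕ → ℝ) (hmono : Antitone c) (hnonneg : ∀ k, 0 ≤ c k)
    (hdecay : ∀ k : ℕ, 1 ≤ k →
      (C4 - M1 * (k : ℝ) ^ (-ξ1)) * (k : ℝ) ^ (-β) ≤ c k ∧
      c k ≤ (C4 + M1 * (k : ℝ) ^ (-ξ1)) * (k : ℝ) ^ (-β))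
    (K : ℕ → ℕ) (Cl Cu : ℝ) (hCl : 0 < Cl) (hCu : 0 < Cu)
    (hK4 : ∀ n : ℕ, 1 ≤ n →
      Cl ≤ (K n : ℝ) ^ ((2 : ℝ) + δ1) / (n : ℝ) ∧ (K n : ℝ) ^ ((2 : ℝ) + δ1) / (n : ℝ) ≤ Cu)
    (L : ℕ → ℕ → ℝ)
    (hL : ∀ n k, L n k = (k : ℝ) / ((n : ℝ) - (K n : ℝ)) * σ2 + c k)
    (kstar : ℕ → ℕ)
    (hkstar : ∀ n, kstar n ∈ Finset.Icc 1 (K n) ∧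
      ∀ k ∈ Finset.Icc 1 (K n), L n (kstar n) ≤ L n k) :
    ∃ C : ℝ, 0 < C ∧ ∃ n0 : ℕ, ∀ n ≥ n0,
      |(kstar n : ℝ) - (σ2 / (((n : ℝ) - (K n : ℝ)) * C4 * β)) ^ (-(1 / (β + 1)))| ≤ C := by
  have hβ1 : (1:ℝ) < β := by linarith
  have hβ0 : (0:ℝ) < β := by linarith
  have hβp : (0:ℝ) < β + 1 := by linarith
  have hδp : (0:ℝ) < 2 + δ1 := by linarith
  obtain ⟨e1, he1⟩ : ∃ e : ℝ, e = 1 / (β + 1) := ⟨_, rfl⟩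
  obtain ⟨e2, he2⟩ : ∃ e : ℝ, e = 1 / (2 + δ1) := ⟨_, rfl⟩
  have he1pos : 0 < e1 := by rw [he1]; positivity
  have he2pos : 0 < e2 := by rw [he2]; positivity
  have he2lt1 : e2 < 1 := by rw [he2, div_lt_one hδp]; linarith
  have he12 : e1 < e2 := by rw [he1, he2, div_lt_div_iff₀ hβp hδp]; linarith
  -- constants
  obtain ⟨ε, hε⟩ : ∃ e : ℝ, e = min (1/2) ((2*(β+3)) ^ (-(1/β))) := ⟨_, rfl⟩
  have h2β3 : (0:ℝ) < 2*(β+3) := by linarith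
  have hεpos : 0 < ε := by
    rw [hε]; exact lt_min (by norm_num) (Real.rpow_pos_of_pos h2β3 _)
  have hεhalf : ε ≤ 1/2 := by rw [hε]; exact min_le_left _ _
  have hεβ : 2*(β+3) ≤ ε ^ (-β) := by
    have h1 : ε ≤ (2*(β+3)) ^ (-(1/β)) := by rw [hε]; exact min_le_right _ _
    have h2 : ((2*(β+3)) ^ (-(1/β))) ^ (-β) = 2*(β+3) := by
      rw [← Real.rpow_mul h2β3.le,
        show -(1/β) * -β = 1 by rw [neg_mul_neg, one_div, inv_mul_cancel₀ hβ0.ne'],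
        Real.rpow_one]
    calc 2*(β+3) = ((2*(β+3)) ^ (-(1/β))) ^ (-β) := h2.symm
      _ ≤ ε ^ (-β) := Real.rpow_le_rpow_of_nonpos hεpos h1 (by linarith)
  obtain ⟨E, hE⟩ : ∃ e : ℝ, e = ε ^ (-(β+2)) := ⟨_, rfl⟩
  have hEpos : 0 < E := by rw [hE]; exact Real.rpow_pos_of_pos hεpos _
  obtain ⟨D, hD⟩ : ∃ d : ℝ,
      d = max 1 (Real.sqrt (4*(C4*β^2 + M1*(1+E))/(C4*β)) + 1) := ⟨_, rfl⟩
  have hD1 : 1 ≤ D := by rw [hD]; exact le_max_left _ _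
  have hDsq : C4*β^2 + M1*(1+E) < C4*β/4 * D^2 := by
    have hR : (0:ℝ) ≤ 4*(C4*β^2 + M1*(1+E))/(C4*β) := by positivity
    have hsq := Real.sq_sqrt hR
    have hsn := Real.sqrt_nonneg (4*(C4*β^2 + M1*(1+E))/(C4*β))
    have hDge : Real.sqrt (4*(C4*β^2 + M1*(1+E))/(C4*β)) + 1 ≤ D := by
      rw [hD]; exact le_max_right _ _
    have hRD : 4*(C4*β^2 + M1*(1+E))/(C4*β) < D^2 := by
      have hp2 := pow_le_pow_left₀ (by linarith : (0:ℝ) ≤ Real.sqrt (4*(C4*β^2 + M1*(1+E))/(C4*β)) + 1) hDge 2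
      linarith [hp2, hsq.le, hsq.ge, hsn]
    have hcb : (0:ℝ) < C4*β := by positivity
    have heq : C4*β/4 * (4*(C4*β^2 + M1*(1+E))/(C4*β)) = C4*β^2 + M1*(1+E) := by
      field_simp
    linarith [mul_lt_mul_of_pos_left hRD (show (0:ℝ) < C4*β/4 by positivity), heq.le, heq.ge]
  obtain ⟨M0, hM0⟩ : ∃ x : ℝ, x = max (max D 1)
      (max ((2 + Real.sqrt (2*M1/C4))/ε) (Real.sqrt (β^2 + M1/C4))) := ⟨_, rfl⟩
  -- eventually facts
  have hT : Tendsto (fun n : ℕ => (n:ℝ)) atTop atTop := tendsto_natCast_atTop_atTop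
  have hev1 : ∀ᶠ n : ℕ in atTop, 1 ≤ n := eventually_ge_atTop 1
  have hev2 : ∀ᶠ n : ℕ in atTop, 2*Cu^e2 ≤ (n:ℝ)^(1-e2) :=
    ((tendsto_rpow_atTop (by linarith : (0:ℝ) < 1-e2)).comp hT).eventually_ge_atTop _
  have hev3 : ∀ᶠ n : ℕ in atTop, M0 ≤ ((n:ℝ)*(C4*β/(2*σ2)))^e1 := by
    have t1 : Tendsto (fun x:ℝ => x*(C4*β/(2*σ2))) atTop atTop :=
      Tendsto.atTop_mul_const (by positivity) tendsto_id
    exact (((tendsto_rpow_atTop he1pos).comp t1).comp hT).eventually_ge_atTop _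
  have hev4 : ∀ᶠ n : ℕ in atTop, ((C4*β/σ2)^e1 + 1)/Cl^e2 ≤ (n:ℝ)^(e2-e1) :=
    ((tendsto_rpow_atTop (by linarith : (0:ℝ) < e2-e1)).comp hT).eventually_ge_atTop _
  obtain ⟨n0, hn0⟩ := eventually_atTop.mp (hev1.and (hev2.and (hev3.and hev4)))
  refine ⟨D, by linarith, n0, fun n hn => ?_⟩
  obtain ⟨hn1, h2n, h3n, h4n⟩ := hn0 n hn
  have hn1R : (1:ℝ) ≤ (n:ℝ) := by exact_mod_cast hn1
  have hnpos : (0:ℝ) < n := by linarith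
  -- bounds on K n
  have hKc : (0:ℝ) ≤ (K n : ℝ) := Nat.cast_nonneg _
  have hKeq : ((K n:ℝ) ^ ((2:ℝ)+δ1)) ^ e2 = (K n:ℝ) := by
    rw [← Real.rpow_mul hKc,
      show ((2:ℝ)+δ1)*e2 = 1 by rw [he2, mul_one_div, div_self hδp.ne'],
      Real.rpow_one]
  have hKup : (K n:ℝ) ≤ (Cu * n)^e2 := by
    have h := (hK4 n hn1).2
    rw [div_le_iff₀ hnpos] at h
    calc (K n:ℝ) = ((K n:ℝ) ^ ((2:ℝ)+δ1)) ^ e2 := hKeq.symm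
      _ ≤ (Cu * n)^e2 := Real.rpow_le_rpow (by positivity) h he2pos.le
  have hKlow : (Cl * n)^e2 ≤ (K n:ℝ) := by
    have h := (hK4 n hn1).1
    rw [le_div_iff₀ hnpos] at h
    calc (Cl * n)^e2 ≤ ((K n:ℝ) ^ ((2:ℝ)+δ1)) ^ e2 :=
          Real.rpow_le_rpow (by positivity) h he2pos.le
      _ = (K n:ℝ) := hKeq
  have hnsplit : (n:ℝ)^e2 * (n:ℝ)^(1-e2) = (n:ℝ) := by
    rw [← Real.rpow_add hnpos, show e2+(1-e2) = 1 by ring, Real.rpow_one]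
  have hne2nn : (0:ℝ) ≤ (n:ℝ)^e2 := Real.rpow_nonneg hnpos.le _
  have hCun : (Cu * n)^e2 ≤ (n:ℝ)/2 := by
    rw [Real.mul_rpow hCu.le hnpos.le]
    have h := mul_le_mul_of_nonneg_left h2n hne2nn
    rw [hnsplit] at h
    linarith
  have hNr0 : (n:ℝ)/2 ≤ (n:ℝ) - (K n:ℝ) := by linarith [hKup.trans hCun]
  obtain ⟨Nr, hNrdef⟩ : ∃ x : ℝ, x = (n:ℝ) - (K n:ℝ) := ⟨_, rfl⟩
  rw [← hNrdef]
  have hNrn2 : (n:ℝ)/2 ≤ Nr := by rw [hNrdef]; exact hNr0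
  have hNrpos' : 0 < Nr := by linarith
  have hNrn : Nr ≤ (n:ℝ) := by rw [hNrdef]; linarith
  have hLk : ∀ k : ℕ, L n k = σ2/Nr*(k:ℝ) + c k := by
    intro k
    rw [hL n k, ← hNrdef]
    ring
  -- the quantity m
  obtain ⟨m, hmdef⟩ : ∃ x : ℝ, x = (Nr*C4*β/σ2)^e1 := ⟨_, rfl⟩
  have hBpos : 0 < Nr*C4*β/σ2 := by positivity
  have hm0 : 0 < m := by rw [hmdef]; exact Real.rpow_pos_of_pos hBpos e1
  have hTm : (σ2 / (Nr*C4*β)) ^ (-(1 / (β + 1))) = m := by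
    have h1 : (0:ℝ) < σ2/(Nr*C4*β) := by positivity
    rw [Real.rpow_neg h1.le, ← Real.inv_rpow h1.le, inv_div, hmdef, he1]
  rw [hTm]
  -- key identity
  have hmpow : m ^ (β+1) = Nr*C4*β/σ2 := by
    rw [hmdef, ← Real.rpow_mul hBpos.le,
      show e1*(β+1) = 1 by rw [he1, one_div, inv_mul_cancel₀ hβp.ne'],
      Real.rpow_one]
  have hId : σ2 / Nr = C4 * β * m ^ (-(β+1)) := by
    rw [Real.rpow_neg hm0.le, hmpow, inv_div]
    field_simp
  -- m is large
  have hM0m : M0 ≤ m := by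
    have hbase : (n:ℝ)*(C4*β/(2*σ2)) ≤ Nr*C4*β/σ2 := by
      have h1 : (n:ℝ)*(C4*β/(2*σ2)) = ((n:ℝ)/2)*(C4*β/σ2) := by ring
      have h2 : Nr*C4*β/σ2 = Nr*(C4*β/σ2) := by ring
      rw [h1, h2]
      exact mul_le_mul_of_nonneg_right hNrn2 (by positivity)
    calc M0 ≤ ((n:ℝ)*(C4*β/(2*σ2)))^e1 := h3n
      _ ≤ (Nr*C4*β/σ2)^e1 := Real.rpow_le_rpow (by positivity) hbase he1pos.le
      _ = m := hmdef.symm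
  have hmD : D ≤ m := by
    have : D ≤ M0 := by rw [hM0]; exact le_trans (le_max_left D 1) (le_max_left _ _)
    linarith
  have hm1 : (1:ℝ) ≤ m := by
    have : (1:ℝ) ≤ M0 := by rw [hM0]; exact le_trans (le_max_right D 1) (le_max_left _ _)
    linarith
  have hmε : 2 + Real.sqrt (2*M1/C4) ≤ ε*m := by
    have h1 : (2 + Real.sqrt (2*M1/C4))/ε ≤ M0 := by
      rw [hM0]; exact le_trans (le_max_left _ _) (le_max_right _ _)
    have h2 : (2 + Real.sqrt (2*M1/C4))/ε ≤ m := by linarith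
    rw [div_le_iff₀ hεpos] at h2
    linarith
  have hmq : C4*β^2 + M1 ≤ C4*m^2 := by
    have h1 : Real.sqrt (β^2 + M1/C4) ≤ M0 := by
      rw [hM0]; exact le_trans (le_max_right _ _) (le_max_right _ _)
    have h2 : Real.sqrt (β^2 + M1/C4) ≤ m := by linarith
    have h3 : β^2 + M1/C4 ≤ m^2 := by
      calc β^2 + M1/C4 = Real.sqrt (β^2 + M1/C4) ^ 2 :=
            (Real.sq_sqrt (by positivity)).symm
        _ ≤ m^2 := pow_le_pow_left₀ (Real.sqrt_nonneg _) h2 2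
    have hX : C4*(β^2 + M1/C4) = C4*β^2 + M1 := by field_simp
    calc C4*β^2 + M1 = C4*(β^2 + M1/C4) := hX.symm
      _ ≤ C4*m^2 := mul_le_mul_of_nonneg_left h3 hC4.le
  -- m + 1 ≤ K n
  have hmK : m + 1 ≤ (K n:ℝ) := by
    have hmup : m ≤ (C4*β/σ2)^e1 * (n:ℝ)^e1 := by
      rw [hmdef, ← Real.mul_rpow (by positivity) hnpos.le]
      apply Real.rpow_le_rpow (by positivity) _ he1pos.le
      calc Nr*C4*β/σ2 = Nr*(C4*β/σ2) := by ring
        _ ≤ (n:ℝ)*(C4*β/σ2) := mul_le_mul_of_nonneg_right hNrn (by positivity)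
        _ = C4*β/σ2 * (n:ℝ) := by ring
    have hne1 : (1:ℝ) ≤ (n:ℝ)^e1 := by
      calc (1:ℝ) = (1:ℝ)^e1 := (Real.one_rpow _).symm
        _ ≤ (n:ℝ)^e1 := Real.rpow_le_rpow zero_le_one hn1R he1pos.le
    have hClpos : (0:ℝ) < Cl^e2 := Real.rpow_pos_of_pos hCl _
    rw [div_le_iff₀ hClpos] at h4n
    have hsplit : (n:ℝ)^(e2-e1) * (n:ℝ)^e1 = (n:ℝ)^e2 := by
      rw [← Real.rpow_add hnpos]
      congr 1
      ring
    have h5 : ((C4*β/σ2)^e1 + 1) * (n:ℝ)^e1 ≤ Cl^e2 * (n:ℝ)^e2 := by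
      calc ((C4*β/σ2)^e1 + 1) * (n:ℝ)^e1 ≤ ((n:ℝ)^(e2-e1) * Cl^e2) * (n:ℝ)^e1 :=
            mul_le_mul_of_nonneg_right h4n (by positivity)
        _ = Cl^e2 * ((n:ℝ)^(e2-e1) * (n:ℝ)^e1) := by ring
        _ = Cl^e2 * (n:ℝ)^e2 := by rw [hsplit]
    have h6 : Cl^e2 * (n:ℝ)^e2 = (Cl*(n:ℝ))^e2 := (Real.mul_rpow hCl.le hnpos.le).symm
    have h7 : (C4*β/σ2)^e1 * (n:ℝ)^e1 + 1 ≤ ((C4*β/σ2)^e1 + 1) * (n:ℝ)^e1 := by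
      have h8 : (0:ℝ) ≤ (C4*β/σ2)^e1 := by positivity
      have h9 : ((C4*β/σ2)^e1 + 1) * (n:ℝ)^e1 = (C4*β/σ2)^e1 * (n:ℝ)^e1 + (n:ℝ)^e1 := by ring
      linarith
    have h9 : (Cl*(n:ℝ))^e2 ≤ (K n:ℝ) := hKlow
    linarith [h6 ▸ h5]
  -- splitting helper
  have hsplitgen : ∀ x : ℝ, 0 < x → x^(-(β+2)) = x^(-β) * (x^2)⁻¹ := by
    intro x hx
    rw [show -(β+2) = -β + -2 by ring, Real.rpow_add hx]
    congr 1
    rw [show (-2:ℝ) = -((2:ℕ):ℝ) by norm_num, Real.rpow_neg hx.le, Real.rpow_natCast]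
  -- c bounds
  have hc : ∀ k : ℕ, 1 ≤ k →
      C4*(k:ℝ)^(-β) - M1*(k:ℝ)^(-(β+2)) ≤ c k ∧
      c k ≤ C4*(k:ℝ)^(-β) + M1*(k:ℝ)^(-(β+2)) := by
    intro k hk
    have hk1 : (1:ℝ) ≤ (k:ℝ) := by exact_mod_cast hk
    have hk0 : (0:ℝ) < (k:ℝ) := by linarith
    have hξ : (k:ℝ)^(-ξ1) ≤ (k:ℝ)^(-(2:ℝ)) :=
      Real.rpow_le_rpow_of_exponent_le hk1 (by linarith)
    have hkβ : (0:ℝ) ≤ (k:ℝ)^(-β) := Real.rpow_nonneg hk0.le _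
    have hsplit : (k:ℝ)^(-(2:ℝ)) * (k:ℝ)^(-β) = (k:ℝ)^(-(β+2)) := by
      rw [← Real.rpow_add hk0]
      congr 1
      ring
    obtain ⟨hlo, hhi⟩ := hdecay k hk
    have h5 : M1*((k:ℝ)^(-ξ1)*(k:ℝ)^(-β)) ≤ M1*(k:ℝ)^(-(β+2)) := by
      rw [← hsplit]
      exact mul_le_mul_of_nonneg_left (mul_le_mul_of_nonneg_right hξ hkβ) hM1.le
    constructor
    · have he : (C4 - M1*(k:ℝ)^(-ξ1)) * (k:ℝ)^(-β)
          = C4*(k:ℝ)^(-β) - M1*((k:ℝ)^(-ξ1)*(k:ℝ)^(-β)) := by ring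
      rw [he] at hlo
      linarith
    · have he : (C4 + M1*(k:ℝ)^(-ξ1)) * (k:ℝ)^(-β)
          = C4*(k:ℝ)^(-β) + M1*((k:ℝ)^(-ξ1)*(k:ℝ)^(-β)) := by ring
      rw [he] at hhi
      linarith
  -- the reference point k0
  obtain ⟨k0, hk0def⟩ : ∃ k : ℕ, k = ⌈m⌉₊ := ⟨_, rfl⟩
  have hk0low : m ≤ (k0:ℝ) := by rw [hk0def]; exact Nat.le_ceil m
  have hk0up : (k0:ℝ) ≤ m + 1 := by rw [hk0def]; exact (Nat.ceil_lt_add_one hm0.le).le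
  have hk0ge1 : 1 ≤ k0 := by rw [hk0def]; exact Nat.one_le_ceil_iff.mpr hm0
  have hk0K : k0 ≤ K n := by
    have : (k0:ℝ) ≤ (K n:ℝ) := by linarith
    exact_mod_cast this
  have hk0r : (0:ℝ) < (k0:ℝ) := by
    have : (1:ℝ) ≤ (k0:ℝ) := by exact_mod_cast hk0ge1
    linarith
  have hmβnn : (0:ℝ) ≤ m^(-β) := Real.rpow_nonneg hm0.le _
  have hmβpos : (0:ℝ) < m^(-β) := Real.rpow_pos_of_pos hm0 _
  have hmβ2pos : (0:ℝ) < m^(-(β+2)) := Real.rpow_pos_of_pos hm0 _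
  have hm2 : m^(-(β+2)) = m^(-β) * (m^2)⁻¹ := hsplitgen m hm0
  -- rewrite lemmas
  have hrw2 : ∀ t : ℝ, σ2/Nr * t = C4*β*m^(-β) * (t/m) := by
    intro t
    rw [hId, show -(β+1) = -β + -1 by ring, Real.rpow_add hm0, Real.rpow_neg_one]
    field_simp
  have hrw1 : ∀ t : ℝ, 0 < t → t^(-β) = m^(-β) * ((t/m)^(-β)) := by
    intro t ht
    rw [Real.div_rpow ht.le hm0.le]
    field_simp
  -- convexity bound
  have hKey : ∀ t : ℝ, 0 < t →
      C4*(β+1)*m^(-β) + C4*β/4 * min ((t-m)^2/m^2) 1 * m^(-β) ≤ σ2/Nr * t + C4 * t^(-β) := by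
    intro t ht
    have hy : 0 < t/m := div_pos ht hm0
    have hA := lemA β hβ1.le hy
    have hmineq : min ((t-m)^2/m^2) 1 = min ((t/m-1)^2) 1 := by
      congr 1
      rw [show t/m - 1 = (t-m)/m by field_simp, div_pow]
    rw [hmineq]
    calc C4*(β+1)*m^(-β) + C4*β/4 * min ((t/m-1)^2) 1 * m^(-β)
        = C4*m^(-β) * (β + 1 + β/4 * min ((t/m-1)^2) 1) := by ring
      _ ≤ C4*m^(-β) * ((t/m)^(-β) + β*(t/m)) := by
          apply mul_le_mul_of_nonneg_left _ (by positivity)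
          linarith
      _ = σ2/Nr * t + C4 * t^(-β) := by
          rw [hrw2 t, hrw1 t ht]; ring
  -- upper bound at k0
  have hUB : L n k0 ≤ C4*(β+1)*m^(-β) + (C4*β^2 + M1)*m^(-(β+2)) := by
    obtain ⟨s, hsdef⟩ : ∃ s : ℝ, s = ((k0:ℝ) - m)/m := ⟨_, rfl⟩
    have hs0 : 0 ≤ s := by
      rw [hsdef]; exact div_nonneg (by linarith) hm0.le
    have hs1 : s ≤ 1/m := by
      rw [hsdef, div_le_div_iff₀ hm0 hm0]
      exact mul_le_mul_of_nonneg_right (by linarith) hm0.le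
    have hys : (k0:ℝ)/m = 1 + s := by rw [hsdef]; field_simp; ring
    have hBb := lemB β hβ1.le hs0
    have hb1 : (k0:ℝ)^(-β) ≤ m^(-β) * (1 - β*s + β^2*s^2) := by
      rw [hrw1 (k0:ℝ) hk0r, hys]
      exact mul_le_mul_of_nonneg_left hBb hmβnn
    have hb2 : σ2/Nr * (k0:ℝ) = C4*β*m^(-β) * (1+s) := by rw [hrw2, hys]
    have hb3 : M1*(k0:ℝ)^(-(β+2)) ≤ M1*m^(-(β+2)) :=
      mul_le_mul_of_nonneg_left
        (Real.rpow_le_rpow_of_nonpos hm0 hk0low (by linarith)) hM1.le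
    have hb4 : s^2 * m^(-β) ≤ m^(-(β+2)) := by
      have h1 : s^2 ≤ (1/m)^2 := pow_le_pow_left₀ hs0 hs1 2
      have h2 : (1/m)^2 = (m^2)⁻¹ := by field_simp
      have h3 : s^2 ≤ (m^2)⁻¹ := h2 ▸ h1
      rw [hm2]
      linarith [mul_le_mul_of_nonneg_right h3 hmβnn]
    have hb5 : C4*(k0:ℝ)^(-β) ≤ C4*(m^(-β) * (1 - β*s + β^2*s^2)) :=
      mul_le_mul_of_nonneg_left hb1 hC4.le
    have hb6 : C4*β^2*(s^2*m^(-β)) ≤ C4*β^2*m^(-(β+2)) :=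
      mul_le_mul_of_nonneg_left hb4 (by positivity)
    have hck0 := (hc k0 hk0ge1).2
    rw [hLk k0]
    have hexp : C4*β*m^(-β)*(1+s) + C4*(m^(-β)*(1 - β*s + β^2*s^2))
        = C4*(β+1)*m^(-β) + C4*β^2*(s^2*m^(-β)) := by ring
    linarith [hb2, hb3, hb5, hb6, hck0, hexp]
  have hUB2 : L n k0 ≤ C4*(β+2)*m^(-β) := by
    have hm2pos : (0:ℝ) < m^2 := by positivity
    have h7 : (C4*β^2+M1) * (m^2)⁻¹ ≤ C4 := by
      have h71 : C4*β^2+M1 ≤ C4*m^2 := hmq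
      calc (C4*β^2+M1) * (m^2)⁻¹ ≤ (C4*m^2) * (m^2)⁻¹ :=
            mul_le_mul_of_nonneg_right h71 (by positivity)
        _ = C4 := by field_simp
    have h8 : (C4*β^2+M1) * m^(-(β+2)) ≤ C4 * m^(-β) := by
      rw [hm2]
      calc (C4*β^2+M1) * (m^(-β) * (m^2)⁻¹) = ((C4*β^2+M1) * (m^2)⁻¹) * m^(-β) := by ring
        _ ≤ C4 * m^(-β) := mul_le_mul_of_nonneg_right h7 hmβnn
    calc L n k0 ≤ C4*(β+1)*m^(-β) + (C4*β^2 + M1)*m^(-(β+2)) := hUB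
      _ ≤ C4*(β+1)*m^(-β) + C4*m^(-β) := by linarith
      _ = C4*(β+2)*m^(-β) := by ring
  -- main comparison
  have hcomp : ∀ k : ℕ, k ∈ Finset.Icc 1 (K n) → D < |(k:ℝ) - m| → L n k0 < L n k := by
    intro k hk hDk
    obtain ⟨hk1, hkK⟩ := Finset.mem_Icc.mp hk
    have hk1R : (1:ℝ) ≤ (k:ℝ) := by exact_mod_cast hk1
    have hkpos : (0:ℝ) < (k:ℝ) := by linarith
    rcases le_or_gt (k:ℝ) (ε*m) with hsm | hbig
    · -- small k
      have hεm : (0:ℝ) ≤ ε*m := by positivity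
      obtain ⟨m2, hm2def⟩ : ∃ j : ℕ, j = ⌊ε*m⌋₊ := ⟨_, rfl⟩
      have hkm2 : k ≤ m2 := by rw [hm2def]; exact Nat.le_floor hsm
      have hm2low : ε*m - 1 ≤ (m2:ℝ) := by
        have h := Nat.lt_floor_add_one (ε*m)
        rw [← hm2def] at h
        linarith
      have hm2up : (m2:ℝ) ≤ ε*m := by rw [hm2def]; exact Nat.floor_le hεm
      have hsrt := Real.sqrt_nonneg (2*M1/C4)
      have hm2ge : 1 + Real.sqrt (2*M1/C4) ≤ (m2:ℝ) := by linarith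
      have hm21 : 1 ≤ m2 := by
        have h : (1:ℝ) ≤ (m2:ℝ) := by linarith
        exact_mod_cast h
      have hm2pos : (0:ℝ) < (m2:ℝ) := by
        have h : (1:ℝ) ≤ (m2:ℝ) := by linarith
        linarith
      have hsq : 2*M1/C4 ≤ (m2:ℝ)^2 := by
        calc 2*M1/C4 = Real.sqrt (2*M1/C4) ^ 2 := (Real.sq_sqrt (by positivity)).symm
          _ ≤ (m2:ℝ)^2 := pow_le_pow_left₀ (Real.sqrt_nonneg _) (by linarith) 2
      have hm2βnn : (0:ℝ) ≤ (m2:ℝ)^(-β) := Real.rpow_nonneg hm2pos.le _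
      have hM1b : M1 * ((m2:ℝ)^2)⁻¹ ≤ C4/2 := by
        have h1 : M1 ≤ C4/2 * (m2:ℝ)^2 := by
          have hX : C4/2 * (2*M1/C4) = M1 := by field_simp
          calc M1 = C4/2 * (2*M1/C4) := hX.symm
            _ ≤ C4/2 * (m2:ℝ)^2 := mul_le_mul_of_nonneg_left hsq (by positivity)
        calc M1 * ((m2:ℝ)^2)⁻¹ ≤ (C4/2 * (m2:ℝ)^2) * ((m2:ℝ)^2)⁻¹ :=
              mul_le_mul_of_nonneg_right h1 (by positivity)
          _ = C4/2 := by field_simp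
      have hcm2 := (hc m2 hm21).1
      have hsplit2 := hsplitgen (m2:ℝ) hm2pos
      have hlow2 : C4/2 * (m2:ℝ)^(-β) ≤ c m2 := by
        have h9 : M1 * (m2:ℝ)^(-(β+2)) ≤ C4/2 * (m2:ℝ)^(-β) := by
          rw [hsplit2]
          calc M1 * ((m2:ℝ)^(-β) * ((m2:ℝ)^2)⁻¹)
              = (M1 * ((m2:ℝ)^2)⁻¹) * (m2:ℝ)^(-β) := by ring
            _ ≤ C4/2 * (m2:ℝ)^(-β) := mul_le_mul_of_nonneg_right hM1b hm2βnn
        linarith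
      have hmono2 : c m2 ≤ c k := hmono hkm2
      have hεmβ : (ε*m)^(-β) ≤ (m2:ℝ)^(-β) :=
        Real.rpow_le_rpow_of_nonpos hm2pos hm2up (by linarith)
      have hmul : (ε*m)^(-β) = ε^(-β) * m^(-β) := Real.mul_rpow hεpos.le hm0.le
      have hlow3 : C4*(β+3)*m^(-β) ≤ C4/2 * (m2:ℝ)^(-β) := by
        calc C4*(β+3)*m^(-β) = C4/2 * (2*(β+3) * m^(-β)) := by ring
          _ ≤ C4/2 * (ε^(-β) * m^(-β)) := by
              apply mul_le_mul_of_nonneg_left _ (by positivity)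
              exact mul_le_mul_of_nonneg_right hεβ hmβnn
          _ = C4/2 * (ε*m)^(-β) := by rw [hmul]
          _ ≤ C4/2 * (m2:ℝ)^(-β) := mul_le_mul_of_nonneg_left hεmβ (by positivity)
      have hpos1 : 0 ≤ σ2/Nr * (k:ℝ) := by positivity
      have hgap : 0 < C4*m^(-β) := by positivity
      rw [hLk k]
      calc L n k0 ≤ C4*(β+2)*m^(-β) := hUB2
        _ < C4*(β+3)*m^(-β) := by linarith [hgap]
        _ ≤ c m2 := le_trans hlow3 hlow2
        _ ≤ c k := hmono2
        _ ≤ σ2/Nr*(k:ℝ) + c k := by linarith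
    · -- k > ε m
      have hck := (hc k hk1).1
      have hKeyk := hKey (k:ℝ) hkpos
      have hDle : D ≤ |(k:ℝ) - m| := hDk.le
      have hD2 : D^2 ≤ ((k:ℝ)-m)^2 := by
        have h1 : D^2 ≤ |(k:ℝ)-m|^2 := pow_le_pow_left₀ (by linarith) hDle 2
        rwa [sq_abs] at h1
      have hminlow : D^2/m^2 ≤ min (((k:ℝ)-m)^2/m^2) 1 := by
        apply le_min
        · gcongr
        · rw [div_le_one (by positivity)]
          calc D^2 ≤ m^2 := pow_le_pow_left₀ (by linarith) hmD 2
            _ ≤ m^2 := le_refl _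
      have hkE : M1*(k:ℝ)^(-(β+2)) ≤ M1*E * m^(-(β+2)) := by
        have h1 : (k:ℝ)^(-(β+2)) ≤ (ε*m)^(-(β+2)) :=
          Real.rpow_le_rpow_of_nonpos (by positivity) hbig.le (by linarith)
        have h2 : (ε*m)^(-(β+2)) = E * m^(-(β+2)) := by
          rw [Real.mul_rpow hεpos.le hm0.le, hE]
        calc M1*(k:ℝ)^(-(β+2)) ≤ M1*(ε*m)^(-(β+2)) :=
              mul_le_mul_of_nonneg_left h1 hM1.le
          _ = M1*E * m^(-(β+2)) := by rw [h2]; ring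
      have hquad : C4*β/4 * (D^2/m^2) * m^(-β)
          ≤ C4*β/4 * min (((k:ℝ)-m)^2/m^2) 1 * m^(-β) := by
        apply mul_le_mul_of_nonneg_right _ hmβnn
        exact mul_le_mul_of_nonneg_left hminlow (by positivity)
      have hstrict : (C4*β^2 + M1*(1+E)) * m^(-(β+2)) < C4*β/4 * D^2 * m^(-(β+2)) :=
        mul_lt_mul_of_pos_right hDsq hmβ2pos
      have hq2 : C4*β/4 * (D^2/m^2) * m^(-β) = C4*β/4 * D^2 * m^(-(β+2)) := by
        rw [hm2]; ring
      rw [hLk k]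
      calc L n k0 ≤ C4*(β+1)*m^(-β) + (C4*β^2 + M1)*m^(-(β+2)) := hUB
        _ < C4*(β+1)*m^(-β) + C4*β/4 * D^2 * m^(-(β+2)) - M1*E*m^(-(β+2)) := by
            linarith [hstrict]
        _ ≤ C4*(β+1)*m^(-β) + C4*β/4 * min (((k:ℝ)-m)^2/m^2) 1 * m^(-β)
            - M1*E*m^(-(β+2)) := by
            rw [← hq2]; linarith
        _ ≤ σ2/Nr*(k:ℝ) + C4*(k:ℝ)^(-β) - M1*E*m^(-(β+2)) := by linarith
        _ ≤ σ2/Nr*(k:ℝ) + c k := by linarith [hkE]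
  -- finish
  obtain ⟨hksIcc, hksmin⟩ := hkstar n
  have hmink0 : L n (kstar n) ≤ L n k0 := hksmin k0 (Finset.mem_Icc.mpr ⟨hk0ge1, hk0K⟩)
  by_contra hcon
  push_neg at hcon
  have hlt := hcomp (kstar n) hksIcc hcon
  linarith
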